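/- Let f, g be representable positive functionals on a *-algebra A with Lebesgue decomposition g = g_a + g_s. Then g_s and f are mutually singular: if h is a representable positive functional with h ≤ f and h ≤ g_s, then h = 0. Moreover, g_a is maximal: any representable h with h ≤ g and h f-absolutely continuous satisfies h ≤ g_a. -/

import Mathlib

open scoped ComplexOrder InnerProductSpace
open Filter Topology

set_option linter.unusedSectionVars false
set_option maxHeartbeats 1000000

/-- A linear functional on a `*`-algebra is *representable* if it is positive,
satisfies `|f a|² ≤ C · f (a⋆ a)` for some `C ≥ 0`, and satisfies the boundedness
condition `f (b⋆ x⋆ x b) ≤ λ_x · f (b⋆ b)` for every `x`. -/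
def IsRepresentable {A : Type*} [Ring A] [StarRing A] [Algebra ℂ A] [StarModule ℂ A]
    (f : A →ₗ[ℂ] ℂ) : Prop :=
  (∀ a : A, 0 ≤ f (star a * a)) ∧
  (∃ C : ℝ, 0 ≤ C ∧ ∀ a : A, ‖f a‖ ^ 2 ≤ C * (f (star a * a)).re) ∧
  (∀ x : A, ∃ lam : ℝ, 0 ≤ lam ∧
    ∀ b : A, (f (star (x * b) * (x * b))).re ≤ lam * (f (star b * b)).re)

/-- The subspace `M = {ζ ∈ H_B | ∃ (aₙ), f (aₙ⋆ aₙ) → 0 and B aₙ = π_B aₙ ζ_B → ζ}`. -/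
def lebSet {A : Type*} [Ring A] [StarRing A] [Algebra ℂ A] [StarModule ℂ A]
    {HB : Type*} [NormedAddCommGroup HB] [InnerProductSpace ℂ HB] [CompleteSpace HB]
    (f : A →ₗ[ℂ] ℂ) (πB : A →ₗ[ℂ] (HB →L[ℂ] HB)) (ζB : HB) : Set HB :=
  {ζ : HB | ∃ a : ℕ → A,
    Tendsto (fun n => f (star (a n) * a n)) atTop (nhds 0) ∧
    Tendsto (fun n => πB (a n) ζB) atTop (nhds ζ)}

variable {A : Type*} [Ring A] [StarRing A] [Algebra ℂ A] [StarModule ℂ A]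
variable {HB : Type*} [NormedAddCommGroup HB] [InnerProductSpace ℂ HB] [CompleteSpace HB]

/-- Positive functionals are hermitian. -/
lemma herm_aux (h : A →ₗ[ℂ] ℂ) (pos : ∀ a : A, 0 ≤ h (star a * a)) (x y : A) :
    h (star y * x) = (starRingEnd ℂ) (h (star x * y)) := by
  have him : ∀ z : A, (h (star z * z)).im = 0 := fun z => (Complex.nonneg_iff.mp (pos z)).2.symm
  have e1 : h (star (x + y) * (x + y)) =
      h (star x * x) + h (star x * y) + h (star y * x) + h (star y * y) := by
    simp [star_add, add_mul, mul_add, map_add]; ring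
  have e2 : h (star (x + Complex.I • y) * (x + Complex.I • y)) =
      h (star x * x) + Complex.I * h (star x * y) - Complex.I * h (star y * x)
        + h (star y * y) := by
    simp [star_add, star_smul, add_mul, mul_add, map_add, smul_mul_assoc, mul_smul_comm,
      map_smul, smul_smul, Complex.I_mul_I, smul_eq_mul]
    ring
  have i1 := him (x + y)
  have i2 := him (x + Complex.I • y)
  rw [e1] at i1
  rw [e2] at i2
  simp only [Complex.add_im, Complex.sub_im, Complex.mul_im, Complex.I_re, Complex.I_im,
    him x, him y] at i1 i2
  apply Complex.ext <;> simp [Complex.conj_re, Complex.conj_im] <;> linarith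

/-- Cauchy–Schwarz for a positive functional. -/
lemma cs_aux (h : A →ₗ[ℂ] ℂ) (pos : ∀ a : A, 0 ≤ h (star a * a)) (x y : A) :
    ‖h (star x * y)‖ ≤ Real.sqrt (h (star x * x)).re * Real.sqrt (h (star y * y)).re := by
  let c : PreInnerProductSpace.Core ℂ A :=
    { inner := fun u v => h (star u * v)
      conj_inner_symm := fun u v => (herm_aux h pos v u).symm
      re_inner_nonneg := fun u => (Complex.nonneg_iff.mp (pos u)).1
      add_left := fun u v w => by simp [star_add, add_mul, map_add]
      smul_left := fun u v r => by
        simp [star_smul, smul_mul_assoc, map_smul, smul_eq_mul] }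
  have key := @InnerProductSpace.Core.inner_mul_inner_self_le ℂ A _ _ _ c x y
  have hsym : ‖(h (star y * x))‖ = ‖(h (star x * y))‖ := by
    rw [herm_aux h pos y x, RCLike.norm_conj]
  have key2 : ‖h (star x * y)‖ * ‖h (star x * y)‖ ≤
      (h (star x * x)).re * (h (star y * y)).re := by
    have key' : ‖h (star x * y)‖ * ‖h (star y * x)‖ ≤
        (h (star x * x)).re * (h (star y * y)).re := key
    rwa [hsym] at key'
  have h1 : (0:ℝ) ≤ (h (star x * x)).re := (Complex.nonneg_iff.mp (pos x)).1
  calc ‖h (star x * y)‖ = Real.sqrt (‖h (star x * y)‖ * ‖h (star x * y)‖) :=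
        (Real.sqrt_mul_self (norm_nonneg _)).symm
    _ ≤ Real.sqrt ((h (star x * x)).re * (h (star y * y)).re) := Real.sqrt_le_sqrt key2
    _ = Real.sqrt (h (star x * x)).re * Real.sqrt (h (star y * y)).re := Real.sqrt_mul h1 _

lemma tendsto_c_of_re {ι : Type*} {l : Filter ι} {u : ι → ℂ} (h0 : ∀ i, 0 ≤ u i)
    (hre : Tendsto (fun i => (u i).re) l (nhds 0)) : Tendsto u l (nhds 0) := by
  have hu : u = fun i => (((u i).re : ℝ) : ℂ) := funext fun i => by
    apply Complex.ext
    · simp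
    · simp [← (Complex.nonneg_iff.mp (h0 i)).2]
  rw [hu]
  have := (Complex.continuous_ofReal.tendsto 0).comp hre
  simpa [Function.comp_def] using this

lemma tendsto_re_c {ι : Type*} {l : Filter ι} {u : ι → ℂ} (h : Tendsto u l (nhds 0)) :
    Tendsto (fun i => (u i).re) l (nhds 0) := by
  have := (Complex.continuous_re.tendsto 0).comp h
  simpa [Function.comp_def] using this

lemma renorm_aux (r : ℝ) : (((r : ℂ))^2).re = r^2 := by
  rw [← Complex.ofReal_pow]; exact Complex.ofReal_re _

/-- **Lebesgue decomposition theorem** (singularity and maximality). With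
`g_a a = ⟨π_B a (I − P) ζ_B, (I − P) ζ_B⟩` and `g_s a = ⟨π_B a (P ζ_B), P ζ_B⟩`:
(1) `g_s ⟂ f`: any representable `h` with `h ≤ f` and `h ≤ g_s` is zero;
(2) `g_a` is maximal: any representable `h` with `h ≤ g` that is `f`-absolutely continuous
satisfies `h ≤ g_a`. -/
theorem lebesgue_decomposition_singular_and_maximal
    (f g : A →ₗ[ℂ] ℂ) (hf : IsRepresentable f) (hg : IsRepresentable g)
    (πB : A →ₗ[ℂ] (HB →L[ℂ] HB)) (ζB : HB)
    (hmul : ∀ x y : A, πB (x * y) = (πB x).comp (πB y))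
    (hstar : ∀ (x : A) (u v : HB), ⟪u, πB x v⟫_ℂ = ⟪πB (star x) u, v⟫_ℂ)
    (hgns : ∀ a : A, g a = ⟪ζB, πB a ζB⟫_ℂ)
    (hcyc : Dense (Set.range fun a : A => πB a ζB))
    (M : Submodule ℂ HB) (hM : (M : Set HB) = lebSet f πB ζB)
    (P : HB →L[ℂ] HB) (hP : ∀ ζ : HB, P ζ ∈ M ∧ ζ - P ζ ∈ Mᗮ) :
    (∀ h : A →ₗ[ℂ] ℂ, IsRepresentable h →
      (∀ a : A, h (star a * a) ≤ f (star a * a)) →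
      (∀ a : A, h (star a * a) ≤ ⟪P ζB, πB (star a * a) (P ζB)⟫_ℂ) →
      h = 0) ∧
    (∀ h : A →ₗ[ℂ] ℂ, IsRepresentable h →
      (∀ a : A, h (star a * a) ≤ g (star a * a)) →
      (∀ a : ℕ → A,
        Tendsto (fun n => f (star (a n) * a n)) atTop (nhds 0) →
        Tendsto (fun p : ℕ × ℕ => h (star (a p.1 - a p.2) * (a p.1 - a p.2)))
          (atTop ×ˢ atTop) (nhds 0) →
        Tendsto (fun n => h (star (a n) * a n)) atTop (nhds 0)) →
      (∀ a : A, h (star a * a) ≤ ⟪ζB - P ζB, πB (star a * a) (ζB - P ζB)⟫_ℂ)) := by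
  obtain ⟨fpos, -, fbound⟩ := hf
  -- membership characterization
  have hmem : ∀ ζ : HB, ζ ∈ M ↔ ζ ∈ lebSet f πB ζB := fun ζ => by
    rw [← hM]; rfl
  have hPmem : ∀ ζ : HB, P ζ ∈ M := fun ζ => (hP ζ).1
  -- M is invariant
  have hMinv : ∀ (x : A) (ζ : HB), ζ ∈ M → πB x ζ ∈ M := by
    intro x ζ hζ
    obtain ⟨c, hcf, hcB⟩ := (hmem ζ).mp hζ
    obtain ⟨lam, hlam0, hlam⟩ := fbound x
    refine (hmem _).mpr ⟨fun n => x * c n, ?_, ?_⟩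
    · refine tendsto_c_of_re (fun n => fpos _) ?_
      refine squeeze_zero (fun n => (Complex.nonneg_iff.mp (fpos _)).1)
        (fun n => hlam (c n)) ?_
      have := (tendsto_re_c hcf).const_mul lam
      simpa using this
    · have h1 : Tendsto (fun n => πB x (πB (c n) ζB)) atTop (nhds (πB x ζ)) :=
        ((πB x).continuous.tendsto ζ).comp hcB
      refine h1.congr fun n => ?_
      rw [hmul]; rfl
  -- Mᗮ is invariant
  have hMperpinv : ∀ (x : A) (w : HB), w ∈ Mᗮ → πB x w ∈ Mᗮ := by
    intro x w hw
    rw [Submodule.mem_orthogonal]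
    intro u hu
    rw [hstar]
    exact (Submodule.mem_orthogonal M w).mp hw _ (hMinv (star x) u hu)
  -- uniqueness of the projection
  have hPuniq : ∀ (ζ m : HB), m ∈ M → ζ - m ∈ Mᗮ → P ζ = m := by
    intro ζ m hm hperp
    have h1 : P ζ - m ∈ M := M.sub_mem (hPmem ζ) hm
    have h2 : P ζ - m ∈ Mᗮ := by
      have he : P ζ - m = (ζ - m) - (ζ - P ζ) := by abel
      rw [he]; exact Submodule.sub_mem _ hperp (hP ζ).2
    have h3 : ⟪P ζ - m, P ζ - m⟫_ℂ = 0 :=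
      (Submodule.mem_orthogonal M _).mp h2 _ h1
    have h4 : P ζ - m = 0 := inner_self_eq_zero.mp h3
    exact sub_eq_zero.mp h4
  have hPfix : ∀ m : HB, m ∈ M → P m = m := fun m hm =>
    hPuniq m m hm (by simpa using Submodule.zero_mem Mᗮ)
  have hPcomm : ∀ (x : A) (ζ : HB), P (πB x ζ) = πB x (P ζ) := by
    intro x ζ
    refine hPuniq _ _ (hMinv x _ (hPmem ζ)) ?_
    have he : πB x ζ - πB x (P ζ) = πB x (ζ - P ζ) := by rw [map_sub]
    rw [he]
    exact hMperpinv x _ (hP ζ).2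
  -- the approximating sequence for P ζB
  obtain ⟨a0, ha0f, ha0B⟩ : P ζB ∈ lebSet f πB ζB := (hmem _).mp (hPmem ζB)
  have hkey : Tendsto (fun n => πB (a0 n) (P ζB)) atTop (nhds (P ζB)) := by
    have h4 : Tendsto (fun n => P (πB (a0 n) ζB)) atTop (nhds (P (P ζB))) :=
      (P.continuous.tendsto _).comp ha0B
    rw [hPfix _ (hPmem ζB)] at h4
    exact h4.congr fun n => hPcomm (a0 n) ζB
  -- inner product computation
  have innerpi : ∀ (x : A) (w : HB), ⟪w, πB (star x * x) w⟫_ℂ = ((‖πB x w‖ : ℂ))^2 := by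
    intro x w
    rw [hmul (star x) x, ContinuousLinearMap.comp_apply, hstar (star x) w (πB x w),
      star_star, inner_self_eq_norm_sq_to_K]
    norm_cast
  have gnormsq : ∀ b : A, (g (star b * b)).re = ‖πB b ζB‖^2 := by
    intro b
    rw [hgns, innerpi, renorm_aux]
  constructor
  · -- Part 1: singularity
    intro h hrep hhf hhgs
    obtain ⟨hpos, ⟨C, hC0, hCb⟩, hbound⟩ := hrep
    have hzero : ∀ a : A, h (star a * a) = 0 := by
      intro a
      set b : ℕ → A := fun n => a * a0 n with hbdef
      set t : ℝ := (h (star a * a)).re with htdef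
      have htnn : 0 ≤ t := (Complex.nonneg_iff.mp (hpos a)).1
      have him : (h (star a * a)).im = 0 := (Complex.nonneg_iff.mp (hpos a)).2.symm
      set ε : ℕ → ℝ := fun n => (h (star (a - b n) * (a - b n))).re with hεdef
      set δ : ℕ → ℝ := fun n => (h (star (b n) * b n)).re with hδdef
      -- δ → 0
      obtain ⟨lam, hlam0, hlam⟩ := fbound a
      have hδ0 : Tendsto δ atTop (nhds 0) := by
        refine squeeze_zero (g := fun n => lam * (f (star (a0 n) * a0 n)).re)
          (fun n => (Complex.nonneg_iff.mp (hpos _)).1)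
          (fun n => le_trans (Complex.le_def.mp (hhf (b n))).1 (hlam (a0 n))) ?_
        have := (tendsto_re_c ha0f).const_mul lam
        simpa using this
      -- ε → 0
      have hε0 : Tendsto ε atTop (nhds 0) := by
        have hv : Tendsto (fun n => πB (a - b n) (P ζB)) atTop (nhds 0) := by
          have h5 : Tendsto (fun n => πB a (πB (a0 n) (P ζB))) atTop
              (nhds (πB a (P ζB))) := ((πB a).continuous.tendsto _).comp hkey
          have h6 : Tendsto (fun n => πB a (P ζB) - πB a (πB (a0 n) (P ζB))) atTop
              (nhds (πB a (P ζB) - πB a (P ζB))) := tendsto_const_nhds.sub h5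
          rw [sub_self] at h6
          refine h6.congr fun n => ?_
          rw [map_sub, ContinuousLinearMap.sub_apply, hbdef]
          simp only [hmul a (a0 n)]
          rfl
        have hnorm : Tendsto (fun n => ‖πB (a - b n) (P ζB)‖^2) atTop (nhds 0) := by
          have := (hv.norm).pow 2
          simpa using this
        refine squeeze_zero (fun n => (Complex.nonneg_iff.mp (hpos _)).1)
          (fun n => ?_) hnorm
        have h7 := (Complex.le_def.mp (hhgs (a - b n))).1
        rwa [innerpi, renorm_aux] at h7
      -- t ≤ √ε √t + √δ √t
      have hbd : ∀ n, t ≤ Real.sqrt (ε n) * Real.sqrt t + Real.sqrt (δ n) * Real.sqrt t := by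
        intro n
        have hsplit : star a * a = star (a - b n) * a + star (b n) * a := by
          rw [star_sub]; noncomm_ring
        have h8 : h (star a * a) = h (star (a - b n) * a) + h (star (b n) * a) := by
          rw [hsplit, map_add]
        have h9 : t ≤ ‖h (star a * a)‖ := by
          rw [htdef]; exact Complex.re_le_norm _
        have h10 : ‖h (star a * a)‖ ≤ ‖h (star (a - b n) * a)‖ + ‖h (star (b n) * a)‖ := by
          rw [h8]; exact norm_add_le _ _
        have h11 := cs_aux h hpos (a - b n) a
        have h12 := cs_aux h hpos (b n) a
        calc t ≤ ‖h (star (a - b n) * a)‖ + ‖h (star (b n) * a)‖ := le_trans h9 h10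
          _ ≤ Real.sqrt (ε n) * Real.sqrt t + Real.sqrt (δ n) * Real.sqrt t :=
            add_le_add h11 h12
      have hlim : Tendsto (fun n => Real.sqrt (ε n) * Real.sqrt t
          + Real.sqrt (δ n) * Real.sqrt t) atTop (nhds 0) := by
        have l1 : Tendsto (fun n => Real.sqrt (ε n)) atTop (nhds 0) := by
          have := (Real.continuous_sqrt.tendsto 0).comp hε0
          simpa [Function.comp_def] using this
        have l2 : Tendsto (fun n => Real.sqrt (δ n)) atTop (nhds 0) := by
          have := (Real.continuous_sqrt.tendsto 0).comp hδ0
          simpa [Function.comp_def] using this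
        have := (l1.mul_const (Real.sqrt t)).add (l2.mul_const (Real.sqrt t))
        simpa using this
      have ht0 : t ≤ 0 := ge_of_tendsto' hlim hbd
      have ht : t = 0 := le_antisymm ht0 htnn
      apply Complex.ext
      · rw [← htdef]; simpa using ht
      · simpa using him
    apply LinearMap.ext
    intro a
    have h13 := hCb a
    rw [hzero a] at h13
    simp only [Complex.zero_re, mul_zero] at h13
    have h14 : ‖h a‖ = 0 := by nlinarith [norm_nonneg (h a), sq_nonneg (‖h a‖)]
    simpa using norm_eq_zero.mp h14
  · -- Part 2: maximality
    intro h hrep hhg habs a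
    obtain ⟨hpos, -, hbound⟩ := hrep
    set w : HB := ζB - P ζB with hwdef
    set b : ℕ → A := fun n => a * a0 n with hbdef
    set t : ℝ := (h (star a * a)).re with htdef
    have htnn : 0 ≤ t := (Complex.nonneg_iff.mp (hpos a)).1
    have him : (h (star a * a)).im = 0 := (Complex.nonneg_iff.mp (hpos a)).2.symm
    set δ : ℕ → ℝ := fun n => (h (star (b n) * b n)).re with hδdef
    -- δ → 0 via absolute continuity
    obtain ⟨lamf, hlamf0, hlamf⟩ := fbound a
    obtain ⟨lamh, hlamh0, hlamh⟩ := hbound a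
    have hδ0 : Tendsto δ atTop (nhds 0) := by
      refine tendsto_re_c (habs b ?_ ?_)
      · refine tendsto_c_of_re (fun n => fpos _) ?_
        refine squeeze_zero (fun n => (Complex.nonneg_iff.mp (fpos _)).1)
          (fun n => hlamf (a0 n)) ?_
        have := (tendsto_re_c ha0f).const_mul lamf
        simpa using this
      · refine tendsto_c_of_re (fun p => hpos _) ?_
        have hdiff : ∀ p : ℕ × ℕ, b p.1 - b p.2 = a * (a0 p.1 - a0 p.2) := by
          intro p; rw [hbdef]; simp [mul_sub]
        have hBnorm : Tendsto (fun p : ℕ × ℕ =>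
            ‖πB (a0 p.1) ζB - πB (a0 p.2) ζB‖^2) (atTop ×ˢ atTop) (nhds 0) := by
          have h1 : Tendsto (fun p : ℕ × ℕ => πB (a0 p.1) ζB - πB (a0 p.2) ζB)
              (atTop ×ˢ atTop) (nhds (P ζB - P ζB)) :=
            (ha0B.comp tendsto_fst).sub (ha0B.comp tendsto_snd)
          rw [sub_self] at h1
          have := (h1.norm).pow 2
          simpa using this
        refine squeeze_zero (fun p => (Complex.nonneg_iff.mp (hpos _)).1)
          (fun p => ?_) (by simpa using hBnorm.const_mul lamh)
        rw [hdiff p]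
        refine le_trans (hlamh _) ?_
        refine mul_le_mul_of_nonneg_left ?_ hlamh0
        have h2 := (Complex.le_def.mp (hhg (a0 p.1 - a0 p.2))).1
        rw [gnormsq, map_sub, ContinuousLinearMap.sub_apply] at h2
        exact h2
    -- the main bound
    have hbd : ∀ n, t ≤ ‖πB a ζB - πB (b n) ζB‖^2
        + 2 * (Real.sqrt t * Real.sqrt (δ n)) := by
      intro n
      have hexp : star (a - b n) * (a - b n)
          = star a * a - star a * b n - star (b n) * a + star (b n) * b n := by
        rw [star_sub]; noncomm_ring
      have h3 : h (star (a - b n) * (a - b n))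
          = h (star a * a) - h (star a * b n) - h (star (b n) * a)
            + h (star (b n) * b n) := by
        rw [hexp]; simp only [map_sub, map_add]
      have hre3 : (h (star (a - b n) * (a - b n))).re
          = t - 2 * (h (star a * b n)).re + δ n := by
        have hherm : (h (star (b n) * a)).re = (h (star a * b n)).re := by
          rw [herm_aux h hpos a (b n)]
          exact Complex.conj_re _
        rw [h3]
        simp only [Complex.add_re, Complex.sub_re, hherm]
        ring
      have h4 : (h (star (a - b n) * (a - b n))).re ≤ ‖πB (a - b n) ζB‖^2 := by
        have := (Complex.le_def.mp (hhg (a - b n))).1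
        rwa [gnormsq] at this
      have h5 : ‖h (star a * b n)‖ ≤ Real.sqrt t * Real.sqrt (δ n) := cs_aux h hpos a (b n)
      have h6 : (h (star a * b n)).re ≤ ‖h (star a * b n)‖ := Complex.re_le_norm _
      have hδnn : 0 ≤ δ n := (Complex.nonneg_iff.mp (hpos _)).1
      have h8 : πB (a - b n) ζB = πB a ζB - πB (b n) ζB := by
        rw [map_sub]; rfl
      rw [h8] at h4
      linarith [h4, hre3, h5, h6, hδnn]
    have hlim : Tendsto (fun n => ‖πB a ζB - πB (b n) ζB‖^2
        + 2 * (Real.sqrt t * Real.sqrt (δ n))) atTop (nhds (‖πB a w‖^2)) := by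
      have l1 : Tendsto (fun n => πB a ζB - πB (b n) ζB) atTop (nhds (πB a w)) := by
        have h9 : Tendsto (fun n => πB a (πB (a0 n) ζB)) atTop (nhds (πB a (P ζB))) :=
          ((πB a).continuous.tendsto _).comp ha0B
        have h10 : Tendsto (fun n => πB a ζB - πB a (πB (a0 n) ζB)) atTop
            (nhds (πB a ζB - πB a (P ζB))) := tendsto_const_nhds.sub h9
        have h11 : πB a ζB - πB a (P ζB) = πB a w := by
          rw [hwdef, map_sub]
        rw [h11] at h10
        refine h10.congr fun n => ?_
        rw [hbdef]
        simp only [hmul a (a0 n)]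
        rfl
      have l2 : Tendsto (fun n => ‖πB a ζB - πB (b n) ζB‖^2) atTop
          (nhds (‖πB a w‖^2)) := (l1.norm).pow 2
      have l3 : Tendsto (fun n => Real.sqrt (δ n)) atTop (nhds 0) := by
        have := (Real.continuous_sqrt.tendsto 0).comp hδ0
        simpa [Function.comp_def] using this
      have l4 := l2.add (((l3.const_mul (Real.sqrt t)).const_mul 2))
      simpa using l4
    have ht : t ≤ ‖πB a w‖^2 := ge_of_tendsto' hlim hbd
    rw [innerpi a w, Complex.le_def]
    constructor
    · rw [renorm_aux]; exact ht
    · have hc : ((‖πB a w‖ : ℂ))^2 = ((‖πB a w‖^2 : ℝ) : ℂ) := by push_cast; ring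
      rw [him, hc, Complex.ofReal_im]
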